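/- Under assumptions (i) M ⊥ R | X, G=2, (ii) M ⊥ G | X, and (iii) Y ⊥ R | X, M, G=1, with q(x,m) = 1/p(R=1|X=x,M=m,G=1), for any function h(X,M): E[q(X,M)·R·h(X,M) | G=1] = E[ E[h(X,M) | X, R=1, G=2] | G=1 ]. -/

import Mathlib

open Finset Set Real

noncomputable def Pr {Ω : Type*} [Fintype Ω] (μ : Ω → ℝ) (A : Set Ω) : ℝ :=
  ∑ ω, A.indicator μ ω

noncomputable def cPr {Ω : Type*} [Fintype Ω] (μ : Ω → ℝ) (A B : Set Ω) : ℝ :=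
  Pr μ (A ∩ B) / Pr μ B

noncomputable def cE {Ω : Type*} [Fintype Ω] (μ : Ω → ℝ) (f : Ω → ℝ) (B : Set Ω) : ℝ :=
  (∑ ω, B.indicator (fun ω' => μ ω' * f ω') ω) / Pr μ B

section aux
variable {Ω : Type*} [Fintype Ω]

lemma Pr_eq_ite (μ : Ω → ℝ) (P : Ω → Prop) [DecidablePred P] :
    Pr μ {ω | P ω} = ∑ ω, if P ω then μ ω else 0 := by
  unfold Pr
  apply Finset.sum_congr rfl
  intro ω _
  by_cases h : P ω <;> simp [Set.indicator_apply, h]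

lemma Pr_mono {μ : Ω → ℝ} (hμ : ∀ ω, 0 ≤ μ ω) {A B : Set Ω} (hAB : A ⊆ B) :
    Pr μ A ≤ Pr μ B := by
  apply Finset.sum_le_sum
  intro ω _
  exact Set.indicator_le_indicator_of_subset hAB hμ ω

lemma Pr_congr (μ : Ω → ℝ) {A B : Set Ω} (hAB : A = B) : Pr μ A = Pr μ B := by rw [hAB]

lemma cE_congr_num {Ω : Type*} [Fintype Ω] (μ : Ω → ℝ) {f g : Ω → ℝ} {B : Set Ω}
    (hfg : ∑ ω, B.indicator (fun ω' => μ ω' * f ω') ω =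
      ∑ ω, B.indicator (fun ω' => μ ω' * g ω') ω) :
    cE μ f B = cE μ g B := by
  unfold cE; rw [hfg]

end aux

theorem stmt13
    {Ω 𝓧 𝓜 : Type*} [Fintype Ω]
    (μ : Ω → ℝ) (X : Ω → 𝓧) (M : Ω → 𝓜) (Y : Ω → ℝ) (R G : Ω → ℕ)
    (h : 𝓧 → 𝓜 → ℝ)
    (hμ0 : ∀ ω, 0 ≤ μ ω) (hμ1 : ∑ ω, μ ω = 1)
    (hR : ∀ ω, R ω = 0 ∨ R ω = 1)
    (hG : ∀ ω, G ω = 1 ∨ G ω = 2)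
    (hpos : ∀ x ∈ Set.range X, ∀ m ∈ Set.range M, ∀ y ∈ Set.range Y, ∀ r g : ℕ,
      (r = 0 ∨ r = 1) → (g = 1 ∨ g = 2) →
      0 < Pr μ {ω | X ω = x ∧ M ω = m ∧ Y ω = y ∧ R ω = r ∧ G ω = g})
    (hMAR : ∀ (m : 𝓜) (r : ℕ) (x : 𝓧),
      0 < Pr μ {ω | X ω = x ∧ G ω = 2} →
      cPr μ {ω | M ω = m ∧ R ω = r} {ω | X ω = x ∧ G ω = 2} =
        cPr μ {ω | M ω = m} {ω | X ω = x ∧ G ω = 2} *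
        cPr μ {ω | R ω = r} {ω | X ω = x ∧ G ω = 2})
    (hSel : ∀ (m : 𝓜) (g : ℕ) (x : 𝓧),
      0 < Pr μ {ω | X ω = x} →
      cPr μ {ω | M ω = m ∧ G ω = g} {ω | X ω = x} =
        cPr μ {ω | M ω = m} {ω | X ω = x} * cPr μ {ω | G ω = g} {ω | X ω = x})
    (hCI : ∀ (y : ℝ) (r : ℕ) (x : 𝓧) (m : 𝓜),
      0 < Pr μ {ω | X ω = x ∧ M ω = m ∧ G ω = 1} →
      cPr μ {ω | Y ω = y ∧ R ω = r} {ω | X ω = x ∧ M ω = m ∧ G ω = 1} =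
        cPr μ {ω | Y ω = y} {ω | X ω = x ∧ M ω = m ∧ G ω = 1} *
        cPr μ {ω | R ω = r} {ω | X ω = x ∧ M ω = m ∧ G ω = 1})
 :
    cE μ (fun ω =>
        (1 / cPr μ {ω' | R ω' = 1} {ω' | X ω' = X ω ∧ M ω' = M ω ∧ G ω' = 1}) * (R ω : ℝ) *
          h (X ω) (M ω))
      {ω | G ω = 1} =
    cE μ (fun ω =>
        cE μ (fun ω' => h (X ω') (M ω')) {ω' | X ω' = X ω ∧ R ω' = 1 ∧ G ω' = 2})
      {ω | G ω = 1} := by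
  classical
  -- positivity of all coarse events
  have hpos4 : ∀ x ∈ Set.range X, ∀ m ∈ Set.range M, ∀ r g : ℕ,
      (r = 0 ∨ r = 1) → (g = 1 ∨ g = 2) →
      0 < Pr μ {ω | X ω = x ∧ M ω = m ∧ R ω = r ∧ G ω = g} := by
    intro x hx m hm r g hr hg
    obtain ⟨ω₀, hω₀⟩ := hx
    refine lt_of_lt_of_le (hpos x ⟨ω₀, hω₀⟩ m hm (Y ω₀) ⟨ω₀, rfl⟩ r g hr hg) ?_
    apply Pr_mono hμ0
    intro ω hω
    exact ⟨hω.1, hω.2.1, hω.2.2.2.1, hω.2.2.2.2⟩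
  have hposSub : ∀ x ∈ Set.range X, ∀ m ∈ Set.range M, ∀ (S : Set Ω),
      {ω | X ω = x ∧ M ω = m ∧ R ω = 1 ∧ G ω = 1} ⊆ S ∨
      {ω | X ω = x ∧ M ω = m ∧ R ω = 1 ∧ G ω = 2} ⊆ S →
      0 < Pr μ S := by
    intro x hx m hm S hS
    rcases hS with hS | hS
    · exact lt_of_lt_of_le (hpos4 x hx m hm 1 1 (Or.inr rfl) (Or.inl rfl)) (Pr_mono hμ0 hS)
    · exact lt_of_lt_of_le (hpos4 x hx m hm 1 2 (Or.inr rfl) (Or.inr rfl)) (Pr_mono hμ0 hS)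
  -- the key identity (**)
  have key : ∀ x ∈ Set.range X, ∀ m ∈ Set.range M,
      Pr μ {ω | X ω = x ∧ M ω = m ∧ R ω = 1 ∧ G ω = 2} * Pr μ {ω | X ω = x ∧ G ω = 1} =
      Pr μ {ω | X ω = x ∧ M ω = m ∧ G ω = 1} * Pr μ {ω | X ω = x ∧ R ω = 1 ∧ G ω = 2} := by
    intro x hx m hm
    have posB : 0 < Pr μ {ω | X ω = x ∧ G ω = 2} :=
      hposSub x hx m hm _ (Or.inr (fun ω hω => ⟨hω.1, hω.2.2.2⟩))
    have posX : 0 < Pr μ {ω | X ω = x} :=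
      hposSub x hx m hm _ (Or.inl (fun ω hω => hω.1))
    have posXM : 0 < Pr μ {ω | X ω = x ∧ M ω = m} :=
      hposSub x hx m hm _ (Or.inl (fun ω hω => ⟨hω.1, hω.2.1⟩))
    have hmar := hMAR m 1 x posB
    have hsel1 := hSel m 1 x posX
    have hsel2 := hSel m 2 x posX
    unfold cPr at hmar hsel1 hsel2
    rw [Pr_congr μ (show {ω | M ω = m ∧ R ω = 1} ∩ {ω | X ω = x ∧ G ω = 2} =
        {ω | X ω = x ∧ M ω = m ∧ R ω = 1 ∧ G ω = 2} by
      ext ω; simp only [Set.mem_inter_iff, Set.mem_setOf_eq]; tauto)] at hmar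
    rw [Pr_congr μ (show {ω | M ω = m} ∩ {ω | X ω = x ∧ G ω = 2} =
        {ω | X ω = x ∧ M ω = m ∧ G ω = 2} by
      ext ω; simp only [Set.mem_inter_iff, Set.mem_setOf_eq]; tauto)] at hmar
    rw [Pr_congr μ (show {ω | R ω = 1} ∩ {ω | X ω = x ∧ G ω = 2} =
        {ω | X ω = x ∧ R ω = 1 ∧ G ω = 2} by
      ext ω; simp only [Set.mem_inter_iff, Set.mem_setOf_eq]; tauto)] at hmar
    rw [Pr_congr μ (show {ω | M ω = m ∧ G ω = 1} ∩ {ω | X ω = x} =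
        {ω | X ω = x ∧ M ω = m ∧ G ω = 1} by
      ext ω; simp only [Set.mem_inter_iff, Set.mem_setOf_eq]; tauto)] at hsel1
    rw [Pr_congr μ (show {ω | M ω = m} ∩ {ω | X ω = x} =
        {ω | X ω = x ∧ M ω = m} by
      ext ω; simp only [Set.mem_inter_iff, Set.mem_setOf_eq]; tauto)] at hsel1
    rw [Pr_congr μ (show {ω | G ω = 1} ∩ {ω | X ω = x} =
        {ω | X ω = x ∧ G ω = 1} by
      ext ω; simp only [Set.mem_inter_iff, Set.mem_setOf_eq]; tauto)] at hsel1
    rw [Pr_congr μ (show {ω | M ω = m ∧ G ω = 2} ∩ {ω | X ω = x} =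
        {ω | X ω = x ∧ M ω = m ∧ G ω = 2} by
      ext ω; simp only [Set.mem_inter_iff, Set.mem_setOf_eq]; tauto)] at hsel2
    rw [Pr_congr μ (show {ω | M ω = m} ∩ {ω | X ω = x} =
        {ω | X ω = x ∧ M ω = m} by
      ext ω; simp only [Set.mem_inter_iff, Set.mem_setOf_eq]; tauto)] at hsel2
    rw [Pr_congr μ (show {ω | G ω = 2} ∩ {ω | X ω = x} =
        {ω | X ω = x ∧ G ω = 2} by
      ext ω; simp only [Set.mem_inter_iff, Set.mem_setOf_eq]; tauto)] at hsel2
    set A1 := Pr μ {ω | X ω = x ∧ M ω = m ∧ R ω = 1 ∧ G ω = 2} with hA1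
    set A2 := Pr μ {ω | X ω = x ∧ M ω = m ∧ G ω = 2} with hA2
    set A3 := Pr μ {ω | X ω = x ∧ R ω = 1 ∧ G ω = 2} with hA3
    set B := Pr μ {ω | X ω = x ∧ G ω = 2} with hB
    set C1 := Pr μ {ω | X ω = x ∧ M ω = m ∧ G ω = 1} with hC1
    set D1 := Pr μ {ω | X ω = x ∧ G ω = 1} with hD1
    set PX := Pr μ {ω | X ω = x} with hPX
    set PXM := Pr μ {ω | X ω = x ∧ M ω = m} with hPXM
    have hBne : B ≠ 0 := ne_of_gt posB
    have hPXne : PX ≠ 0 := ne_of_gt posX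
    have e1 : A1 * B = A2 * A3 := by
      apply mul_right_cancel₀ hBne
      field_simp at hmar; linear_combination B * hmar
    have e2 : C1 * PX = PXM * D1 := by
      apply mul_right_cancel₀ hPXne
      field_simp at hsel1; linear_combination PX * hsel1
    have e3 : A2 * PX = PXM * B := by
      apply mul_right_cancel₀ hPXne
      field_simp at hsel2; linear_combination PX * hsel2
    have : (A1 * D1) * (B * PX) = (C1 * A3) * (B * PX) := by
      linear_combination (D1 * PX) * e1 + (A3 * D1) * e3 - (A3 * B) * e2
    exact mul_right_cancel₀ (by positivity) this

  apply cE_congr_num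
  simp only [Set.indicator_apply, Set.mem_setOf_eq]
  have hmapsXM : ∀ ω ∈ (Finset.univ : Finset Ω),
      (X ω, M ω) ∈ Finset.univ.image (fun ω => (X ω, M ω)) :=
    fun ω _ => Finset.mem_image_of_mem _ (Finset.mem_univ ω)
  have hmapsX : ∀ ω ∈ (Finset.univ : Finset Ω), X ω ∈ Finset.univ.image X :=
    fun ω _ => Finset.mem_image_of_mem _ (Finset.mem_univ ω)
  trans (∑ ω, if G ω = 1 then μ ω * h (X ω) (M ω) else 0)
  · -- Part 1
    rw [← Finset.sum_fiberwise_of_maps_to hmapsXM, ← Finset.sum_fiberwise_of_maps_to hmapsXM]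
    apply Finset.sum_congr rfl
    rintro ⟨x, m⟩ hp
    simp only [Finset.mem_image, Finset.mem_univ, true_and, Prod.mk.injEq] at hp
    obtain ⟨ω₀, hX₀, hM₀⟩ := hp
    have hxr : x ∈ Set.range X := ⟨ω₀, hX₀⟩
    have hmr : m ∈ Set.range M := ⟨ω₀, hM₀⟩
    have posXMG1 : 0 < Pr μ {ω | X ω = x ∧ M ω = m ∧ G ω = 1} :=
      hposSub x hxr m hmr _ (Or.inl fun ω hω => ⟨hω.1, hω.2.1, hω.2.2.2⟩)
    have posXMRG1 : 0 < Pr μ {ω | X ω = x ∧ M ω = m ∧ R ω = 1 ∧ G ω = 1} :=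
      hpos4 x hxr m hmr 1 1 (Or.inr rfl) (Or.inl rfl)
    have hc : cPr μ {ω' | R ω' = 1} {ω' | X ω' = x ∧ M ω' = m ∧ G ω' = 1} =
        Pr μ {ω | X ω = x ∧ M ω = m ∧ R ω = 1 ∧ G ω = 1} /
          Pr μ {ω | X ω = x ∧ M ω = m ∧ G ω = 1} := by
      unfold cPr
      rw [Pr_congr μ (show {ω' | R ω' = 1} ∩ {ω' | X ω' = x ∧ M ω' = m ∧ G ω' = 1} =
          {ω | X ω = x ∧ M ω = m ∧ R ω = 1 ∧ G ω = 1} by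
        ext ω; simp only [Set.mem_inter_iff, Set.mem_setOf_eq]; tauto)]
    trans (1 / cPr μ {ω' | R ω' = 1} {ω' | X ω' = x ∧ M ω' = m ∧ G ω' = 1} * h x m) *
        Pr μ {ω | X ω = x ∧ M ω = m ∧ R ω = 1 ∧ G ω = 1}
    · rw [Pr_eq_ite, Finset.mul_sum, Finset.sum_filter]
      apply Finset.sum_congr rfl
      intro ω _
      by_cases hxm : X ω = x ∧ M ω = m
      · obtain ⟨hXe, hMe⟩ := hxm
        rw [hXe, hMe]
        by_cases hg : G ω = 1
        · rcases hR ω with h0 | h1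
          · rw [if_pos rfl, if_pos hg, if_neg (by simp [h0]), h0]
            push_cast
            ring
          · rw [if_pos rfl, if_pos hg, if_pos ⟨rfl, rfl, h1, hg⟩, h1]
            push_cast
            ring
        · rw [if_pos rfl, if_neg hg, if_neg (fun hco => hg hco.2.2.2), mul_zero]
      · rw [if_neg (by simp [Prod.mk.injEq]; tauto),
          if_neg (fun hco => hxm ⟨hco.1, hco.2.1⟩), mul_zero]
    trans h x m * Pr μ {ω | X ω = x ∧ M ω = m ∧ G ω = 1}
    · rw [hc, one_div_div]
      field_simp
    · rw [Pr_eq_ite, Finset.mul_sum, Finset.sum_filter]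
      apply Finset.sum_congr rfl
      intro ω _
      by_cases hxm : X ω = x ∧ M ω = m
      · obtain ⟨hXe, hMe⟩ := hxm
        by_cases hg : G ω = 1
        · rw [if_pos ⟨hXe, hMe, hg⟩, if_pos (by simp [Prod.mk.injEq, hXe, hMe]),
            if_pos hg, hXe, hMe]
          ring
        · rw [if_neg (fun hco => hg hco.2.2), if_pos (by simp [Prod.mk.injEq, hXe, hMe]),
            if_neg hg, mul_zero]
      · rw [if_neg (fun hco => hxm ⟨hco.1, hco.2.1⟩),
          if_neg (by simp [Prod.mk.injEq]; tauto), mul_zero]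
  · -- Part 2
    rw [← Finset.sum_fiberwise_of_maps_to hmapsX, ← Finset.sum_fiberwise_of_maps_to hmapsX]
    apply Finset.sum_congr rfl
    intro x hx'
    simp only [Finset.mem_image, Finset.mem_univ, true_and] at hx'
    obtain ⟨ω₀, hX₀⟩ := hx'
    have hxr : x ∈ Set.range X := ⟨ω₀, hX₀⟩
    have hm₀ : M ω₀ ∈ Set.range M := ⟨ω₀, rfl⟩
    have posA3 : 0 < Pr μ {ω | X ω = x ∧ R ω = 1 ∧ G ω = 2} :=
      hposSub x hxr _ hm₀ _ (Or.inr fun ω hω => ⟨hω.1, hω.2.2.1, hω.2.2.2⟩)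
    have fiberR : (∑ ω ∈ Finset.univ.filter (fun ω => X ω = x),
          (if G ω = 1 then μ ω *
            cE μ (fun ω' => h (X ω') (M ω')) {ω' | X ω' = X ω ∧ R ω' = 1 ∧ G ω' = 2} else 0))
        = cE μ (fun ω' => h (X ω') (M ω')) {ω' | X ω' = x ∧ R ω' = 1 ∧ G ω' = 2} *
            Pr μ {ω | X ω = x ∧ G ω = 1} := by
      rw [Pr_eq_ite, Finset.mul_sum, Finset.sum_filter]
      apply Finset.sum_congr rfl
      intro ω _
      by_cases hxe : X ω = x
      · rw [hxe]
        by_cases hg : G ω = 1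
        · rw [if_pos rfl, if_pos hg, if_pos ⟨rfl, hg⟩]
          ring
        · rw [if_pos rfl, if_neg hg, if_neg (fun hco => hg hco.2), mul_zero]
      · rw [if_neg hxe, if_neg (fun hco => hxe hco.1), mul_zero]
    have fiberS : (∑ ω ∈ Finset.univ.filter (fun ω => X ω = x),
          (if G ω = 1 then μ ω * h (X ω) (M ω) else 0))
        = ∑ ω, if X ω = x ∧ G ω = 1 then μ ω * h x (M ω) else 0 := by
      rw [Finset.sum_filter]
      apply Finset.sum_congr rfl
      intro ω _
      by_cases hxe : X ω = x
      · by_cases hg : G ω = 1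
        · rw [if_pos hxe, if_pos hg, if_pos ⟨hxe, hg⟩, hxe]
        · rw [if_pos hxe, if_neg hg, if_neg (fun hco => hg hco.2)]
      · rw [if_neg hxe, if_neg (fun hco => hxe hco.1)]
    rw [fiberS, fiberR]
    unfold cE
    rw [div_mul_eq_mul_div, eq_div_iff (ne_of_gt posA3)]
    have hNs : (∑ ω, ({ω' | X ω' = x ∧ R ω' = 1 ∧ G ω' = 2}).indicator
          (fun ω' => μ ω' * h (X ω') (M ω')) ω)
        = ∑ p ∈ Finset.univ.image M, h x p *
            Pr μ {ω | X ω = x ∧ M ω = p ∧ R ω = 1 ∧ G ω = 2} := by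
      rw [← Finset.sum_fiberwise_of_maps_to
        (fun ω (_ : ω ∈ Finset.univ) => Finset.mem_image_of_mem M (Finset.mem_univ ω))]
      apply Finset.sum_congr rfl
      intro p _
      rw [Pr_eq_ite, Finset.mul_sum, Finset.sum_filter]
      apply Finset.sum_congr rfl
      intro ω _
      simp only [Set.indicator_apply, Set.mem_setOf_eq]
      by_cases hme : M ω = p
      · by_cases hco : X ω = x ∧ R ω = 1 ∧ G ω = 2
        · rw [if_pos hme, if_pos hco, if_pos ⟨hco.1, hme, hco.2⟩, hco.1, hme]
          ring
        · rw [if_pos hme, if_neg hco, if_neg (fun hc2 => hco ⟨hc2.1, hc2.2.2⟩), mul_zero]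
      · rw [if_neg hme, if_neg (fun hc2 => hme hc2.2.1), mul_zero]
    have hSs : (∑ ω, if X ω = x ∧ G ω = 1 then μ ω * h x (M ω) else 0)
        = ∑ p ∈ Finset.univ.image M, h x p * Pr μ {ω | X ω = x ∧ M ω = p ∧ G ω = 1} := by
      rw [← Finset.sum_fiberwise_of_maps_to
        (fun ω (_ : ω ∈ Finset.univ) => Finset.mem_image_of_mem M (Finset.mem_univ ω))]
      apply Finset.sum_congr rfl
      intro p _
      rw [Pr_eq_ite, Finset.mul_sum, Finset.sum_filter]
      apply Finset.sum_congr rfl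
      intro ω _
      by_cases hme : M ω = p
      · by_cases hco : X ω = x ∧ G ω = 1
        · rw [if_pos hme, if_pos hco, if_pos ⟨hco.1, hme, hco.2⟩, hme]
          ring
        · rw [if_pos hme, if_neg hco, if_neg (fun hc2 => hco ⟨hc2.1, hc2.2.2⟩), mul_zero]
      · rw [if_neg hme, if_neg (fun hc2 => hme hc2.2.1), mul_zero]
    rw [hNs, hSs, Finset.sum_mul, Finset.sum_mul]
    apply Finset.sum_congr rfl
    intro p hp
    have hpr : p ∈ Set.range M := by
      simp only [Finset.mem_image, Finset.mem_univ, true_and] at hp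
      obtain ⟨ω₁, hω₁⟩ := hp
      exact ⟨ω₁, hω₁⟩
    rw [mul_assoc, mul_assoc, ← key x hxr p hpr]
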